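/- arXiv:2409.08422 — 7 statements merged into one kernel-verified Lean document; each statement's English description precedes it below -/
import Mathlib

section
/- Define matrices $F_s, G_s \in \underline{\mathbb{R}}^{n \times p}$ by $[F_s]_{i,j} = [f]_j(z_i)$ and $[G_s]_{i,j} = \mathbf{B}_s[f]_j(z_i)$, where $\mathbf{B}_s$ is the empirical Bellman operator with discount $\gamma \in (0,1)$. If $\bar\theta \in \mathbb{R}^p$ satisfies the max-plus equation $F_s \boxtimes \theta = G_s \boxtimes (\gamma\theta)$, then the max-plus linear function $Q_{\bar\theta}(z) = \max_{j \in [1:p]}([f]_j(z) + [\bar\theta]_j)$ satisfies the empirical Bellman equation $Q_{\bar\theta}(z_i) = r_i + \gamma \max_{u^+} Q_{\bar\theta}(x_i^+, u^+)$ for all $i \in [1:n]$. -/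
open Finset

/-- Max-plus matrix-vector product over `ℝ ∪ {-∞}` (modeled as `WithBot ℝ`). -/
def mpMulVec {m n : ℕ} (A : Fin m → Fin n → WithBot ℝ) (v : Fin n → WithBot ℝ) :
    Fin m → WithBot ℝ :=
  fun i => univ.sup fun j => A i j + v j

/-- Empirical Bellman operator applied to `g : Z → ℝ ∪ {-∞}` at sample `i`. -/
def empBellman {X U : Type*} [Fintype U] {N : ℕ} (r : Fin N → ℝ) (γ : ℝ)
    (xp : Fin N → X) (g : X × U → WithBot ℝ) : Fin N → WithBot ℝ :=
  fun i => (r i : WithBot ℝ) + (univ.sup fun u => g (xp i, u)).map (γ * ·)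

lemma mp_sup_add {ι : Type*} (s : Finset ι) (g : ι → WithBot ℝ) (c : WithBot ℝ) :
    (s.sup fun j => g j + c) = s.sup g + c := by
  have hm : Monotone (fun x : WithBot ℝ => x + c) := fun a b h => add_le_add h (le_refl c)
  rw [Finset.comp_sup_eq_sup_comp (fun x : WithBot ℝ => x + c) (hm.map_sup) (by simp)]
  rfl

lemma mp_add_sup {ι : Type*} (s : Finset ι) (g : ι → WithBot ℝ) (c : WithBot ℝ) :
    (s.sup fun j => c + g j) = c + s.sup g := by
  simp only [add_comm c]
  exact mp_sup_add s g c

lemma mp_map_sup {ι : Type*} (s : Finset ι) (g : ι → WithBot ℝ) {γ : ℝ} (hγ : 0 ≤ γ) :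
    (s.sup g).map (γ * ·) = s.sup fun j => (g j).map (γ * ·) := by
  have hm : Monotone (fun x : WithBot ℝ => x.map (γ * ·)) := by
    intro a b hab
    induction a using WithBot.recBotCoe with
    | bot => simp
    | coe x =>
      induction b using WithBot.recBotCoe with
      | bot => simp at hab
      | coe y =>
        simp only [WithBot.map_coe, WithBot.coe_le_coe] at hab ⊢
        exact mul_le_mul_of_nonneg_left hab hγ
  rw [Finset.comp_sup_eq_sup_comp (fun x : WithBot ℝ => x.map (γ * ·)) (hm.map_sup) (by simp)]
  rfl

lemma mp_map_add_coe (a : WithBot ℝ) (t γ : ℝ) :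
    (a + (t : WithBot ℝ)).map (γ * ·) = a.map (γ * ·) + ((γ * t : ℝ) : WithBot ℝ) := by
  induction a using WithBot.recBotCoe with
  | bot => simp
  | coe x =>
    rw [← WithBot.coe_add, WithBot.map_coe, WithBot.map_coe, ← WithBot.coe_add, mul_add]

/-- if `θ̄ ∈ ℝᵖ` solves the max-plus equation `Fₛ ⊠ θ = Gₛ ⊠ (γθ)`,
then the max-plus linear function `Q_θ̄` solves the empirical Bellman equation. -/
theorem mp_empirical_bellman {X U : Type*} [Fintype U] [Nonempty U] {n p : ℕ}
    (γ : ℝ) (hγ : 0 < γ ∧ γ < 1)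
    (z : Fin n → X × U) (xp : Fin n → X) (r : Fin n → ℝ)
    (f : Fin p → X × U → WithBot ℝ)
    (Fs Gs : Fin n → Fin p → WithBot ℝ)
    (hFs : ∀ i j, Fs i j = f j (z i))
    (hGs : ∀ i j, Gs i j = empBellman r γ xp (f j) i)
    (θbar : Fin p → ℝ)
    (hθ : mpMulVec Fs (fun j => ((θbar j : ℝ) : WithBot ℝ)) =
          mpMulVec Gs (fun j => ((γ * θbar j : ℝ) : WithBot ℝ))) :
    ∀ i, (univ.sup fun j => f j (z i) + (θbar j : WithBot ℝ)) =
      empBellman r γ xp (fun w => univ.sup fun j => f j w + (θbar j : WithBot ℝ)) i := by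
  intro i
  have h := congrFun hθ i
  simp only [mpMulVec, hFs, hGs] at h
  rw [h]
  simp only [empBellman]
  rw [Finset.sup_comm, ]
  have hrhs : (univ.sup fun j : Fin p => univ.sup fun u : U => f j (xp i, u) + (θbar j : WithBot ℝ))
      = univ.sup fun j : Fin p => (univ.sup fun u : U => f j (xp i, u)) + (θbar j : WithBot ℝ) := by
    refine Finset.sup_congr rfl fun j _ => ?_
    exact mp_sup_add univ _ _
  rw [hrhs, mp_map_sup _ _ hγ.1.le]
  have : (univ.sup fun j : Fin p =>
      ((univ.sup fun u : U => f j (xp i, u)) + (θbar j : WithBot ℝ)).map (γ * ·))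
      = univ.sup fun j : Fin p =>
        (univ.sup fun u : U => f j (xp i, u)).map (γ * ·) + ((γ * θbar j : ℝ) : WithBot ℝ) := by
    refine Finset.sup_congr rfl fun j _ => ?_
    exact mp_map_add_coe _ _ _
  rw [this, ← mp_add_sup]
  exact Finset.sup_congr rfl fun j _ => add_assoc _ _ _
end

section
/- Under the assumption that $F_s \in \underline{\mathbb{R}}^{n\times p}$ is doubly $\mathbb{R}$-astic and $G_s \in \underline{\mathbb{R}}^{n\times p}$ is row $\mathbb{R}$-astic, the operator $\mathbf{D}: \mathbb{R}^p \to \mathbb{R}^p$ defined by $\mathbf{D}\theta = -\big[F_s^\top \boxtimes \big(-(G_s \boxtimes (\gamma\theta))\big)\big]$, with $\gamma \in (0,1)$, is a $\gamma$-contraction in the $\infty$-norm: $\|\mathbf{D}\theta_1 - \mathbf{D}\theta_2\|_\infty \le \gamma \|\theta_1 - \theta_2\|_\infty$ for all $\theta_1, \theta_2 \in \mathbb{R}^p$. -/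
open Finset

lemma mp_sup_key {m : ℕ} (A : Fin m → WithBot ℝ) (x y : Fin m → ℝ) (c r s : ℝ)
    (hr : (r : WithBot ℝ) = univ.sup fun j => A j + (x j : WithBot ℝ))
    (hs : (s : WithBot ℝ) = univ.sup fun j => A j + (y j : WithBot ℝ))
    (hxy : ∀ j, x j ≤ y j + c) : r ≤ s + c := by
  have h : (r : WithBot ℝ) ≤ ((s + c : ℝ) : WithBot ℝ) := by
    rw [hr]
    apply Finset.sup_le
    intro j _
    have h1 : A j + (y j : WithBot ℝ) ≤ (s : WithBot ℝ) := by
      rw [hs]; exact Finset.le_sup (f := fun j => A j + (y j : WithBot ℝ)) (Finset.mem_univ j)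
    have h2 : ((x j : ℝ) : WithBot ℝ) ≤ ((y j + c : ℝ) : WithBot ℝ) :=
      WithBot.coe_le_coe.mpr (hxy j)
    calc A j + (x j : WithBot ℝ) ≤ A j + ((y j + c : ℝ) : WithBot ℝ) :=
          add_le_add le_rfl h2
      _ = (A j + (y j : WithBot ℝ)) + (c : WithBot ℝ) := by
          rw [WithBot.coe_add, add_assoc]
      _ ≤ (s : WithBot ℝ) + (c : WithBot ℝ) := add_le_add h1 le_rfl
      _ = ((s + c : ℝ) : WithBot ℝ) := (WithBot.coe_add s c).symm
  exact_mod_cast h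

/-- with `Fₛ` doubly ℝ-astic, `Gₛ` row ℝ-astic and `γ ∈ (0,1)`, the
MP-FQI operator `Dθ = -(Fₛᵀ ⊠ (-(Gₛ ⊠ (γθ))))` is a `γ`-contraction in `∞`-norm. -/
theorem mpfqi_operator_contraction {n p : ℕ}
    (Fs Gs : Fin n → Fin p → WithBot ℝ)
    (hFrow : ∀ i, ∃ j, Fs i j ≠ ⊥) (hFcol : ∀ j, ∃ i, Fs i j ≠ ⊥)
    (hGrow : ∀ i, ∃ j, Gs i j ≠ ⊥)
    (γ : ℝ) (hγ0 : 0 < γ) (hγ1 : γ < 1)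
    (g : (Fin p → ℝ) → Fin n → ℝ)
    (hg : ∀ θ i, (g θ i : WithBot ℝ) =
          mpMulVec Gs (fun j => ((γ * θ j : ℝ) : WithBot ℝ)) i)
    (D : (Fin p → ℝ) → Fin p → ℝ)
    (hD : ∀ θ j, ((-(D θ j) : ℝ) : WithBot ℝ) =
          mpMulVec (fun j i => Fs i j) (fun i => ((-(g θ i) : ℝ) : WithBot ℝ)) j) :
    ∀ θ₁ θ₂ : Fin p → ℝ, ‖D θ₁ - D θ₂‖ ≤ γ * ‖θ₁ - θ₂‖ := by
  intro θ₁ θ₂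
  set c := γ * ‖θ₁ - θ₂‖ with hc
  have hc0 : 0 ≤ c := mul_nonneg hγ0.le (norm_nonneg _)
  have hθ : ∀ j, |γ * θ₁ j - γ * θ₂ j| ≤ c := by
    intro j
    rw [← mul_sub, abs_mul, abs_of_pos hγ0]
    have := norm_le_pi_norm (θ₁ - θ₂) j
    simp only [Pi.sub_apply, Real.norm_eq_abs] at this
    exact mul_le_mul_of_nonneg_left this hγ0.le
  have hgle : ∀ i, |g θ₁ i - g θ₂ i| ≤ c := by
    intro i
    rw [abs_sub_le_iff]
    constructor
    · have := mp_sup_key (Gs i) (fun j => γ * θ₁ j) (fun j => γ * θ₂ j) c _ _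
        (hg θ₁ i) (hg θ₂ i) (fun j => by
          have := (abs_sub_le_iff.mp (hθ j)).1; linarith)
      linarith
    · have := mp_sup_key (Gs i) (fun j => γ * θ₂ j) (fun j => γ * θ₁ j) c _ _
        (hg θ₂ i) (hg θ₁ i) (fun j => by
          have := (abs_sub_le_iff.mp (hθ j)).2; linarith)
      linarith
  have hDle : ∀ j, |D θ₁ j - D θ₂ j| ≤ c := by
    intro j
    rw [abs_sub_le_iff]
    constructor
    · have := mp_sup_key (fun i => Fs i j) (fun i => -(g θ₂ i)) (fun i => -(g θ₁ i)) c _ _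
        (hD θ₂ j) (hD θ₁ j) (fun i => by
          have := (abs_sub_le_iff.mp (hgle i)).1; linarith)
      linarith
    · have := mp_sup_key (fun i => Fs i j) (fun i => -(g θ₁ i)) (fun i => -(g θ₂ i)) c _ _
        (hD θ₁ j) (hD θ₂ j) (fun i => by
          have := (abs_sub_le_iff.mp (hgle i)).2; linarith)
      linarith
  rw [hc] at hc0 ⊢
  refine (pi_norm_le_iff_of_nonneg hc0).mpr fun j => ?_
  simpa [Real.norm_eq_abs] using hDle j
end

section
/- Let $A \in \underline{\mathbb{R}}^{n \times p}$ be doubly $\mathbb{R}$-astic and $b \in \mathbb{R}^n$. Then the principal solution $\theta_{ps} = -(A^\top \boxtimes (-b))$ minimizes $\|A \boxtimes \theta - b\|_\infty$ over the constrained set $\{\theta : A \boxtimes \theta \le b\}$. -/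
open Finset

/-- for doubly ℝ-astic `A` and real `b`, the principal solution
`θps = -(Aᵀ ⊠ (-b))` minimizes `‖A ⊠ θ - b‖_∞` over the subsolution set
`{θ : A ⊠ θ ≤ b}` (any subsolution with real-valued `A ⊠ θ = v` has error at least
that of `θps`). -/
theorem mp_constrained_regression_principal_solution {n p : ℕ}
    (A : Fin n → Fin p → WithBot ℝ)
    (hrow : ∀ i, ∃ j, A i j ≠ ⊥) (hcol : ∀ j, ∃ i, A i j ≠ ⊥)
    (b : Fin n → ℝ)
    (θps : Fin p → ℝ)
    (hps : ∀ j, ((-(θps j) : ℝ) : WithBot ℝ) =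
          mpMulVec (fun j i => A i j) (fun i => ((-(b i) : ℝ) : WithBot ℝ)) j)
    (Aps : Fin n → ℝ)
    (hAps : ∀ i, (Aps i : WithBot ℝ) =
          mpMulVec A (fun j => ((θps j : ℝ) : WithBot ℝ)) i) :
    (∀ i, (Aps i : WithBot ℝ) ≤ (b i : WithBot ℝ)) ∧
    ∀ (θ : Fin p → WithBot ℝ) (v : Fin n → ℝ),
      (∀ i, mpMulVec A θ i = (v i : WithBot ℝ)) →
      (∀ i, (v i : WithBot ℝ) ≤ (b i : WithBot ℝ)) →
      ‖Aps - b‖ ≤ ‖v - b‖ := by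
  -- each term bound: A i j + θps j ≤ b i
  have hterm : ∀ i j, A i j + ((θps j : ℝ) : WithBot ℝ) ≤ ((b i : ℝ) : WithBot ℝ) := by
    intro i j
    cases hA : A i j with
    | bot => simp
    | coe a =>
      have h1 : A i j + ((-(b i) : ℝ) : WithBot ℝ) ≤ ((-(θps j) : ℝ) : WithBot ℝ) := by
        rw [hps j]
        exact Finset.le_sup (f := fun i => A i j + ((-(b i) : ℝ) : WithBot ℝ))
          (Finset.mem_univ i)
      rw [hA, ← WithBot.coe_add, WithBot.coe_le_coe] at h1
      rw [← WithBot.coe_add, WithBot.coe_le_coe]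
      linarith
  have h1 : ∀ i, (Aps i : WithBot ℝ) ≤ (b i : WithBot ℝ) := by
    intro i
    rw [hAps i]
    exact Finset.sup_le fun j _ => hterm i j
  refine ⟨h1, ?_⟩
  intro θ v hv hvb
  -- θ ≤ θps
  have hθ : ∀ j, θ j ≤ ((θps j : ℝ) : WithBot ℝ) := by
    intro j
    obtain ⟨i0, hi0⟩ := hcol j
    have hne : (Finset.univ : Finset (Fin n)).Nonempty := ⟨i0, Finset.mem_univ i0⟩
    obtain ⟨i1, _, hi1⟩ := Finset.exists_mem_eq_sup Finset.univ hne
      (fun i => A i j + ((-(b i) : ℝ) : WithBot ℝ))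
    have hsup : ((-(θps j) : ℝ) : WithBot ℝ) = A i1 j + ((-(b i1) : ℝ) : WithBot ℝ) := by
      rw [hps j]; exact hi1
    -- A i1 j is real
    cases hA : A i1 j with
    | bot => rw [hA] at hsup; simp at hsup
    | coe a =>
      rw [hA, ← WithBot.coe_add] at hsup
      have ha : -(θps j) = a + -(b i1) := WithBot.coe_inj.mp hsup
      -- constraint at i1
      have hc : A i1 j + θ j ≤ ((b i1 : ℝ) : WithBot ℝ) := by
        calc A i1 j + θ j ≤ mpMulVec A θ i1 :=
              Finset.le_sup (f := fun j => A i1 j + θ j) (Finset.mem_univ j)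
          _ = ((v i1 : ℝ) : WithBot ℝ) := hv i1
          _ ≤ _ := hvb i1
      cases hθj : θ j with
      | bot => simp
      | coe t =>
        rw [hA, hθj, ← WithBot.coe_add, WithBot.coe_le_coe] at hc
        rw [WithBot.coe_le_coe]
        linarith
  -- v ≤ Aps
  have hvA : ∀ i, v i ≤ Aps i := by
    intro i
    have : ((v i : ℝ) : WithBot ℝ) ≤ (Aps i : WithBot ℝ) := by
      rw [← hv i, hAps i]
      exact Finset.sup_le fun j _ =>
        le_trans (add_le_add le_rfl (hθ j))
          (Finset.le_sup (f := fun j => A i j + ((θps j : ℝ) : WithBot ℝ))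
            (Finset.mem_univ j))
    exact_mod_cast this
  -- pointwise error comparison
  have key : ∀ i, |Aps i - b i| ≤ |v i - b i| := by
    intro i
    have hA' : Aps i ≤ b i := by exact_mod_cast h1 i
    have hv' : v i ≤ b i := by exact_mod_cast hvb i
    rw [abs_of_nonpos (by linarith), abs_of_nonpos (by linarith)]
    linarith [hvA i]
  -- norm comparison
  have hnn : (0:ℝ) ≤ ‖v - b‖ := norm_nonneg _
  rw [pi_norm_le_iff_of_nonneg hnn]
  intro i
  calc ‖(Aps - b) i‖ = |Aps i - b i| := by simp [Real.norm_eq_abs]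
    _ ≤ |v i - b i| := key i
    _ = ‖(v - b) i‖ := by simp [Real.norm_eq_abs]
    _ ≤ ‖v - b‖ := norm_le_pi_norm _ i
end

section
/- Let $A \in \underline{\mathbb{R}}^{n \times p}$ be doubly $\mathbb{R}$-astic, $b \in \mathbb{R}^n$, and $\theta_{ps} = -(A^\top \boxtimes (-b))$ the principal solution. Then $\hat\theta = \theta_{ps} + \frac{1}{2}\|A \boxtimes \theta_{ps} - b\|_\infty \cdot e$, where $e$ is the all-ones vector, minimizes the unconstrained objective $\|A \boxtimes \theta - b\|_\infty$ over $\theta \in \underline{\mathbb{R}}^p$, and the minimum value is $\frac{1}{2}\|A \boxtimes \theta_{ps} - b\|_\infty$. -/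
open Finset

lemma pi_norm_exists_le {n : ℕ} (hn : n ≠ 0) (f : Fin n → ℝ) : ∃ i, ‖f‖ ≤ |f i| := by
  have hne : (Finset.univ : Finset (Fin n)).Nonempty := by
    simpa [Finset.univ_nonempty_iff] using Fin.pos_iff_nonempty.mp (Nat.pos_of_ne_zero hn)
  obtain ⟨i, -, hi⟩ := Finset.exists_max_image Finset.univ (fun i => |f i|) hne
  refine ⟨i, ?_⟩
  refine (pi_norm_le_iff_of_nonneg (abs_nonneg _)).mpr fun k => ?_
  simpa using hi k (Finset.mem_univ k)

/-- for doubly ℝ-astic `A` and real `b`, the vector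
`θ̂ = θps + ½‖A ⊠ θps - b‖_∞ · e` minimizes the unconstrained `∞`-norm residual
`‖A ⊠ θ - b‖_∞` over `θ ∈ (ℝ ∪ {-∞})ᵖ`, and the minimum value is
`½‖A ⊠ θps - b‖_∞`. -/
theorem mp_unconstrained_regression {n p : ℕ}
    (A : Fin n → Fin p → WithBot ℝ)
    (hrow : ∀ i, ∃ j, A i j ≠ ⊥) (hcol : ∀ j, ∃ i, A i j ≠ ⊥)
    (b : Fin n → ℝ)
    (θps : Fin p → ℝ)
    (hps : ∀ j, ((-(θps j) : ℝ) : WithBot ℝ) =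
          mpMulVec (fun j i => A i j) (fun i => ((-(b i) : ℝ) : WithBot ℝ)) j)
    (Aps : Fin n → ℝ)
    (hAps : ∀ i, (Aps i : WithBot ℝ) =
          mpMulVec A (fun j => ((θps j : ℝ) : WithBot ℝ)) i)
    (Ahat : Fin n → ℝ)
    (hAhat : ∀ i, (Ahat i : WithBot ℝ) =
          mpMulVec A (fun j => ((θps j + ‖Aps - b‖ / 2 : ℝ) : WithBot ℝ)) i) :
    ‖Ahat - b‖ = ‖Aps - b‖ / 2 ∧
    ∀ (θ : Fin p → WithBot ℝ) (v : Fin n → ℝ),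
      (∀ i, mpMulVec A θ i = (v i : WithBot ℝ)) →
      ‖Aps - b‖ / 2 ≤ ‖v - b‖ := by
  classical
  set M : ℝ := ‖Aps - b‖ with hMdef
  have hM0 : (0:ℝ) ≤ M := norm_nonneg _
  -- Aps i ≤ b i
  have hle : ∀ i, Aps i ≤ b i := by
    intro i
    have h1 : (Aps i : WithBot ℝ) ≤ ((b i : ℝ) : WithBot ℝ) := by
      rw [hAps i]
      apply Finset.sup_le
      intro j _
      cases hA : A i j with
      | bot => simp
      | coe a =>
        have h2 : (a : WithBot ℝ) + ((-(b i) : ℝ) : WithBot ℝ) ≤ ((-(θps j) : ℝ) : WithBot ℝ) := by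
          rw [hps j]
          have := Finset.le_sup (f := fun i' => A i' j + ((-(b i') : ℝ) : WithBot ℝ))
            (Finset.mem_univ i)
          simpa [mpMulVec, hA] using this
        rw [← WithBot.coe_add, WithBot.coe_le_coe] at h2
        rw [← WithBot.coe_add, WithBot.coe_le_coe]
        linarith
    exact_mod_cast h1
  have hMi : ∀ i, b i - Aps i ≤ M := by
    intro i
    have h := norm_le_pi_norm (Aps - b) i
    simp only [Pi.sub_apply, Real.norm_eq_abs] at h
    have := neg_abs_le (Aps i - b i)
    linarith
  -- Ahat i = Aps i + M / 2
  have hAhat' : ∀ i, Ahat i = Aps i + M / 2 := by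
    intro i
    have hsup : (Aps i : WithBot ℝ) =
        Finset.univ.sup (fun j => A i j + ((θps j : ℝ) : WithBot ℝ)) := hAps i
    have hne : (Finset.univ : Finset (Fin p)).Nonempty := by
      by_contra h
      rw [Finset.not_nonempty_iff_eq_empty] at h
      rw [h, Finset.sup_empty] at hsup
      exact (WithBot.coe_ne_bot) hsup
    obtain ⟨j0, -, hj0⟩ := Finset.exists_mem_eq_sup _ hne
      (fun j => A i j + ((θps j : ℝ) : WithBot ℝ))
    have h1 : A i j0 + ((θps j0 : ℝ) : WithBot ℝ) = (Aps i : WithBot ℝ) := by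
      rw [hsup, hj0]
    have key : (Ahat i : WithBot ℝ) = ((Aps i + M/2 : ℝ) : WithBot ℝ) := by
      rw [hAhat i]
      apply le_antisymm
      · apply Finset.sup_le
        intro j _
        have h2 : A i j + ((θps j : ℝ) : WithBot ℝ) ≤ (Aps i : WithBot ℝ) := by
          have := Finset.le_sup (f := fun j => A i j + ((θps j : ℝ) : WithBot ℝ))
            (Finset.mem_univ j)
          rwa [← hsup] at this
        calc A i j + ((θps j + M/2 : ℝ) : WithBot ℝ)
            = (A i j + ((θps j : ℝ) : WithBot ℝ)) + ((M/2 : ℝ) : WithBot ℝ) := by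
              rw [add_assoc, ← WithBot.coe_add]
          _ ≤ (Aps i : WithBot ℝ) + ((M/2 : ℝ) : WithBot ℝ) := add_le_add_left h2 _
          _ = ((Aps i + M/2 : ℝ) : WithBot ℝ) := by rw [← WithBot.coe_add]
      · calc ((Aps i + M/2 : ℝ) : WithBot ℝ)
            = (Aps i : WithBot ℝ) + ((M/2 : ℝ) : WithBot ℝ) := by rw [← WithBot.coe_add]
          _ = (A i j0 + ((θps j0 : ℝ) : WithBot ℝ)) + ((M/2 : ℝ) : WithBot ℝ) := by rw [h1]
          _ = A i j0 + ((θps j0 + M/2 : ℝ) : WithBot ℝ) := by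
              rw [add_assoc, ← WithBot.coe_add]
          _ ≤ Finset.univ.sup (fun j => A i j + ((θps j + M/2 : ℝ) : WithBot ℝ)) :=
              Finset.le_sup (f := fun j => A i j + ((θps j + M/2 : ℝ) : WithBot ℝ))
                (Finset.mem_univ j0)
    exact_mod_cast key
  constructor
  · -- ‖Ahat - b‖ = M / 2
    by_cases hn : n = 0
    · subst hn
      have h1 : Ahat - b = 0 := funext fun i => i.elim0
      have h2 : Aps - b = 0 := funext fun i => i.elim0
      rw [h1, hMdef, h2, norm_zero]
      norm_num
    · apply le_antisymm
      · refine (pi_norm_le_iff_of_nonneg (by linarith)).mpr fun i => ?_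
        simp only [Pi.sub_apply, Real.norm_eq_abs, hAhat' i]
        rw [abs_le]
        constructor
        · have := hMi i; linarith
        · have := hle i; linarith
      · obtain ⟨i, hi⟩ := pi_norm_exists_le hn (Aps - b)
        have hattain : b i - Aps i = M := by
          have h1 : |Aps i - b i| = b i - Aps i := by
            rw [abs_of_nonpos (by linarith [hle i])]; ring
          have h2 := hMi i
          simp only [Pi.sub_apply] at hi
          rw [h1] at hi
          linarith
        have := norm_le_pi_norm (Ahat - b) i
        simp only [Pi.sub_apply, Real.norm_eq_abs, hAhat' i] at this
        have h3 : |Aps i + M/2 - b i| = M/2 := by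
          rw [abs_of_nonpos (by linarith)]
          linarith
        rw [h3] at this
        linarith
  · -- minimality
    intro θ v hv
    by_cases hn : n = 0
    · subst hn
      have h2 : Aps - b = 0 := funext fun i => i.elim0
      rw [hMdef, h2]
      simp only [norm_zero, zero_div]
      exact norm_nonneg (v - b)
    set δ : ℝ := ‖v - b‖ with hδdef
    have hδ0 : (0:ℝ) ≤ δ := norm_nonneg _
    have hvb : ∀ i, |v i - b i| ≤ δ := by
      intro i
      have := norm_le_pi_norm (v - b) i
      simpa using this
    -- index attaining M
    obtain ⟨i0, hi0⟩ := pi_norm_exists_le hn (Aps - b)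
    have hattain : b i0 - Aps i0 = M := by
      have h1 : |Aps i0 - b i0| = b i0 - Aps i0 := by
        rw [abs_of_nonpos (by linarith [hle i0])]; ring
      simp only [Pi.sub_apply] at hi0
      rw [h1] at hi0
      have := hMi i0
      linarith
    -- sup attained at some j0
    have hsup0 : (v i0 : WithBot ℝ) = Finset.univ.sup (fun j => A i0 j + θ j) := (hv i0).symm
    have hnep : (Finset.univ : Finset (Fin p)).Nonempty := by
      by_contra h
      rw [Finset.not_nonempty_iff_eq_empty] at h
      rw [h, Finset.sup_empty] at hsup0
      exact (WithBot.coe_ne_bot) hsup0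
    obtain ⟨j0, -, hj0⟩ := Finset.exists_mem_eq_sup _ hnep (fun j => A i0 j + θ j)
    have heq : A i0 j0 + θ j0 = (v i0 : WithBot ℝ) := by rw [← hj0, ← hsup0]
    -- A i0 j0 and θ j0 are real
    obtain ⟨a, ha⟩ : ∃ a : ℝ, A i0 j0 = (a : WithBot ℝ) := by
      cases hA : A i0 j0 with
      | bot => rw [hA, WithBot.bot_add] at heq; exact absurd heq.symm (WithBot.coe_ne_bot)
      | coe a => exact ⟨a, rfl⟩
    obtain ⟨t, ht⟩ : ∃ t : ℝ, θ j0 = (t : WithBot ℝ) := by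
      cases hT : θ j0 with
      | bot => rw [hT, WithBot.add_bot] at heq; exact absurd heq.symm (WithBot.coe_ne_bot)
      | coe t => exact ⟨t, rfl⟩
    rw [ha, ht, ← WithBot.coe_add, WithBot.coe_inj] at heq
    -- sup in hps j0 attained at some i1
    have hsup1 : ((-(θps j0) : ℝ) : WithBot ℝ) =
        Finset.univ.sup (fun i' => A i' j0 + ((-(b i') : ℝ) : WithBot ℝ)) := hps j0
    have hnen : (Finset.univ : Finset (Fin n)).Nonempty := by
      simpa [Finset.univ_nonempty_iff] using Fin.pos_iff_nonempty.mp (Nat.pos_of_ne_zero hn)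
    obtain ⟨i1, -, hi1⟩ := Finset.exists_mem_eq_sup _ hnen
      (fun i' => A i' j0 + ((-(b i') : ℝ) : WithBot ℝ))
    have heq1 : A i1 j0 + ((-(b i1) : ℝ) : WithBot ℝ) = ((-(θps j0) : ℝ) : WithBot ℝ) := by
      rw [← hi1, ← hsup1]
    obtain ⟨a1, ha1⟩ : ∃ a1 : ℝ, A i1 j0 = (a1 : WithBot ℝ) := by
      cases hA : A i1 j0 with
      | bot => rw [hA, WithBot.bot_add] at heq1; exact absurd heq1.symm (WithBot.coe_ne_bot)
      | coe a1 => exact ⟨a1, rfl⟩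
    rw [ha1, ← WithBot.coe_add, WithBot.coe_inj] at heq1
    -- bound t ≤ θps j0 + δ
    have hb1 : a1 + t ≤ v i1 := by
      have h1 : A i1 j0 + θ j0 ≤ (v i1 : WithBot ℝ) := by
        have := Finset.le_sup (f := fun j => A i1 j + θ j) (Finset.mem_univ j0)
        rwa [← hv i1]
      rw [ha1, ht, ← WithBot.coe_add, WithBot.coe_le_coe] at h1
      exact h1
    have hvb1 := hvb i1
    have hvb0 := hvb i0
    rw [abs_le] at hvb1 hvb0
    have htb : t ≤ θps j0 + δ := by linarith [hvb1.2]
    -- Aps i0 ≥ a + θps j0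
    have hb2 : a + θps j0 ≤ Aps i0 := by
      have h1 : A i0 j0 + ((θps j0 : ℝ) : WithBot ℝ) ≤ (Aps i0 : WithBot ℝ) := by
        rw [hAps i0]
        exact Finset.le_sup (f := fun j => A i0 j + ((θps j : ℝ) : WithBot ℝ))
          (Finset.mem_univ j0)
      rw [ha, ← WithBot.coe_add, WithBot.coe_le_coe] at h1
      exact h1
    -- conclude
    have : M ≤ 2 * δ := by linarith [hvb0.1]
    linarith
end

section
/- With $F_s, G_s \in \underline{\mathbb{R}}^{n \times p}$ defined from features $f$ and the empirical Bellman operator $\mathbf{B}_s$ with discount $\gamma \in (0,1)$, suppose $\bar C_s \in \underline{\mathbb{R}}^{p \times p}$ satisfies $F_s \boxtimes \bar C_s = G_s$ and $\bar\theta \in \mathbb{R}^p$ satisfies the max-plus fixed-point equation $\bar\theta = \bar C_s \boxtimes (\gamma\bar\theta)$. Then $Q_{\bar\theta}(z) = \max_j([f]_j(z) + [\bar\theta]_j)$ satisfies the empirical Bellman equation $Q_{\bar\theta}(z_i) = r_i + \gamma\max_{u^+} Q_{\bar\theta}(x_i^+, u^+)$ for all $i \in [1:n]$. -/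
open Finset

lemma wb_sup_add {ι : Type*} (s : Finset ι) (h : ι → WithBot ℝ) (c : WithBot ℝ) :
    s.sup h + c = s.sup (fun j => h j + c) := by
  have := Finset.comp_sup_eq_sup_comp (s := s) (f := h) (g := fun x => x + c)
    (fun x y => (monotone_id.add_const c).map_sup x y) (by simp)
  exact this

lemma wb_add_sup {ι : Type*} (s : Finset ι) (h : ι → WithBot ℝ) (c : WithBot ℝ) :
    c + s.sup h = s.sup (fun j => c + h j) := by
  have := Finset.comp_sup_eq_sup_comp (s := s) (f := h) (g := fun x => c + x)
    (fun x y => ((monotone_id.const_add c)).map_sup x y) (by simp)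
  exact this

lemma wb_map_mono {γ : ℝ} (hγ : 0 < γ) : Monotone (WithBot.map (γ * ·)) := by
  intro a b hab
  cases a with
  | bot => simp
  | coe a =>
    cases b with
    | bot => simp at hab
    | coe b =>
      simp only [WithBot.map_coe, WithBot.coe_le_coe] at *
      exact mul_le_mul_of_nonneg_left hab hγ.le

lemma wb_map_sup {ι : Type*} {γ : ℝ} (hγ : 0 < γ) (s : Finset ι) (h : ι → WithBot ℝ) :
    (s.sup h).map (γ * ·) = s.sup (fun j => (h j).map (γ * ·)) := by
  have := Finset.comp_sup_eq_sup_comp (s := s) (f := h) (g := WithBot.map (γ * ·))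
    (fun x y => (wb_map_mono hγ).map_sup x y) (by simp)
  exact this

lemma wb_map_add (γ : ℝ) (x y : WithBot ℝ) :
    (x + y).map (γ * ·) = x.map (γ * ·) + y.map (γ * ·) := by
  cases x with
  | bot => simp
  | coe a =>
    cases y with
    | bot => simp
    | coe b =>
      rw [← WithBot.coe_add, WithBot.map_coe, WithBot.map_coe, WithBot.map_coe, ← WithBot.coe_add]
      exact congrArg _ (mul_add γ a b)
open Finset

/-- Max-plus matrix-matrix product. -/
def mpMul {m n p : ℕ} (A : Fin m → Fin n → WithBot ℝ) (B : Fin n → Fin p → WithBot ℝ) :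
    Fin m → Fin p → WithBot ℝ :=
  fun i k => univ.sup fun j => A i j + B j k

/-- if `Fₛ ⊠ C̄ₛ = Gₛ` and `θ̄ = C̄ₛ ⊠ (γθ̄)`, then `Q_θ̄` solves the
empirical Bellman equation. -/
theorem mp_empirical_bellman_II {X U : Type*} [Fintype U] [Nonempty U] {n p : ℕ}
    (γ : ℝ) (hγ : 0 < γ ∧ γ < 1)
    (z : Fin n → X × U) (xp : Fin n → X) (r : Fin n → ℝ)
    (f : Fin p → X × U → WithBot ℝ)
    (Fs Gs : Fin n → Fin p → WithBot ℝ)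
    (hFs : ∀ i j, Fs i j = f j (z i))
    (hGs : ∀ i j, Gs i j = empBellman r γ xp (f j) i)
    (Cbar : Fin p → Fin p → WithBot ℝ)
    (hC : mpMul Fs Cbar = Gs)
    (θbar : Fin p → ℝ)
    (hθ : ∀ j, (θbar j : WithBot ℝ) =
          mpMulVec Cbar (fun k => ((γ * θbar k : ℝ) : WithBot ℝ)) j) :
    ∀ i, (univ.sup fun j => f j (z i) + (θbar j : WithBot ℝ)) =
      empBellman r γ xp (fun w => univ.sup fun j => f j w + (θbar j : WithBot ℝ)) i := by
  intro i
  obtain ⟨hγ0, -⟩ := hγ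
  have hCi : ∀ k, (univ.sup fun j => Fs i j + Cbar j k) = Gs i k := fun k =>
    congrFun (congrFun hC i) k
  have lhs_eq : (univ.sup fun j => f j (z i) + (θbar j : WithBot ℝ))
      = univ.sup fun k => Gs i k + ((γ * θbar k : ℝ) : WithBot ℝ) := by
    have h1 : ∀ j, f j (z i) + (θbar j : WithBot ℝ)
        = univ.sup fun k => (Fs i j + Cbar j k) + ((γ * θbar k : ℝ) : WithBot ℝ) := by
      intro j
      rw [← hFs i j, hθ j]
      simp only [mpMulVec]
      rw [wb_add_sup]
      simp only [add_assoc]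
    rw [Finset.sup_congr rfl (fun j _ => h1 j), Finset.sup_comm]
    refine Finset.sup_congr rfl fun k _ => ?_
    rw [← wb_sup_add, hCi k]
  have goalL : (univ.sup fun k => Gs i k + ((γ * θbar k : ℝ) : WithBot ℝ))
      = (r i : WithBot ℝ) + univ.sup fun k =>
          (univ.sup fun u => f k (xp i, u)).map (γ * ·) + ((γ * θbar k : ℝ) : WithBot ℝ) := by
    rw [wb_add_sup]
    refine Finset.sup_congr rfl fun k _ => ?_
    rw [hGs i k]
    simp only [empBellman, add_assoc]
  have goalR : empBellman r γ xp (fun w => univ.sup fun j => f j w + (θbar j : WithBot ℝ)) i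
      = (r i : WithBot ℝ) + univ.sup fun k =>
          (univ.sup fun u => f k (xp i, u)).map (γ * ·) + ((γ * θbar k : ℝ) : WithBot ℝ) := by
    simp only [empBellman]
    congr 1
    rw [wb_map_sup hγ0]
    simp only [wb_map_sup hγ0, wb_map_add, WithBot.map_coe]
    rw [Finset.sup_comm]
    refine Finset.sup_congr rfl fun k _ => ?_
    rw [← wb_sup_add, ← wb_map_sup hγ0]
  rw [lhs_eq, goalL, goalR]
end

section
/- Suppose $F_s^H \in \underline{\mathbb{R}}^{q\times p}$ is doubly $\mathbb{R}$-astic and $G_s^H \in \underline{\mathbb{R}}^{q\times p}$ is row $\mathbb{R}$-astic, and $\gamma \in (0,1)$. Then the operator $\mathbf{D}^H: \mathbb{R}^p \to \mathbb{R}^p$ given by $\mathbf{D}^H\theta = -\big[(F_s^H)^\top \boxtimes \big(-(G_s^H \boxtimes (\gamma\theta))\big)\big]$ is a $\gamma$-contraction in the $\infty$-norm. -/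
open Finset

lemma key_sup_le {n : ℕ} (a : Fin n → WithBot ℝ) (v w : Fin n → ℝ) (c : ℝ)
    (hc : ∀ j, v j ≤ w j + c) (x y : ℝ)
    (hx : (x : WithBot ℝ) = univ.sup fun j => a j + (v j : WithBot ℝ))
    (hy : (y : WithBot ℝ) = univ.sup fun j => a j + (w j : WithBot ℝ)) :
    x ≤ y + c := by
  have h : (x : WithBot ℝ) ≤ ((y + c : ℝ) : WithBot ℝ) := by
    rw [hx]
    apply Finset.sup_le
    intro j _
    have h1 : a j + (v j : WithBot ℝ) ≤ (a j + (w j : WithBot ℝ)) + (c : WithBot ℝ) := by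
      rw [add_assoc]
      exact add_le_add_right (by exact_mod_cast hc j) _
    have h2 : a j + (w j : WithBot ℝ) ≤ (y : WithBot ℝ) :=
      hy ▸ Finset.le_sup (f := fun j => a j + (w j : WithBot ℝ)) (Finset.mem_univ j)
    calc a j + (v j : WithBot ℝ) ≤ (a j + (w j : WithBot ℝ)) + (c : WithBot ℝ) := h1
      _ ≤ (y : WithBot ℝ) + (c : WithBot ℝ) := add_le_add_left h2 _
      _ = ((y + c : ℝ) : WithBot ℝ) := by rw [WithBot.coe_add]
  exact_mod_cast h

/-- with `Fₛᴴ ∈ underline ℝ^{q×p}` doubly ℝ-astic, `Gₛᴴ` row ℝ-astic and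
`γ ∈ (0,1)`, the operator `Dᴴθ = -((Fₛᴴ)ᵀ ⊠ (-(Gₛᴴ ⊠ (γθ))))` is a `γ`-contraction
in the `∞`-norm. -/
theorem vmpfqi_operator_contraction {q p : ℕ}
    (FsH GsH : Fin q → Fin p → WithBot ℝ)
    (hFrow : ∀ k, ∃ j, FsH k j ≠ ⊥) (hFcol : ∀ j, ∃ k, FsH k j ≠ ⊥)
    (hGrow : ∀ k, ∃ j, GsH k j ≠ ⊥)
    (γ : ℝ) (hγ0 : 0 < γ) (hγ1 : γ < 1)
    (g : (Fin p → ℝ) → Fin q → ℝ)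
    (hg : ∀ θ k, (g θ k : WithBot ℝ) =
          mpMulVec GsH (fun j => ((γ * θ j : ℝ) : WithBot ℝ)) k)
    (D : (Fin p → ℝ) → Fin p → ℝ)
    (hD : ∀ θ j, ((-(D θ j) : ℝ) : WithBot ℝ) =
          mpMulVec (fun j k => FsH k j) (fun k => ((-(g θ k) : ℝ) : WithBot ℝ)) j) :
    ∀ θ₁ θ₂ : Fin p → ℝ, ‖D θ₁ - D θ₂‖ ≤ γ * ‖θ₁ - θ₂‖ := by
  intro θ₁ θ₂
  set c := ‖θ₁ - θ₂‖ with hcdef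
  have hc0 : 0 ≤ c := norm_nonneg _
  have hθ : ∀ j, |θ₁ j - θ₂ j| ≤ c := by
    intro j
    have := norm_le_pi_norm (θ₁ - θ₂) j
    simpa [Real.norm_eq_abs] using this
  have hgb : ∀ k, |g θ₁ k - g θ₂ k| ≤ γ * c := by
    intro k
    have h12 : g θ₁ k ≤ g θ₂ k + γ * c := by
      refine key_sup_le (GsH k) _ _ _ (fun j => ?_) _ _ (hg θ₁ k) (hg θ₂ k)
      have := abs_le.mp (hθ j)
      nlinarith [this.1, this.2]
    have h21 : g θ₂ k ≤ g θ₁ k + γ * c := by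
      refine key_sup_le (GsH k) _ _ _ (fun j => ?_) _ _ (hg θ₂ k) (hg θ₁ k)
      have := abs_le.mp (hθ j)
      nlinarith [this.1, this.2]
    rw [abs_sub_le_iff]
    constructor <;> linarith
  have hDb : ∀ j, |D θ₁ j - D θ₂ j| ≤ γ * c := by
    intro j
    have h12 : -(D θ₁ j) ≤ -(D θ₂ j) + γ * c := by
      refine key_sup_le (fun k => FsH k j) _ _ _ (fun k => ?_) _ _ (hD θ₁ j) (hD θ₂ j)
      have := abs_le.mp (hgb k)
      linarith [this.1]
    have h21 : -(D θ₂ j) ≤ -(D θ₁ j) + γ * c := by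
      refine key_sup_le (fun k => FsH k j) _ _ _ (fun k => ?_) _ _ (hD θ₂ j) (hD θ₁ j)
      have := abs_le.mp (hgb k)
      linarith [this.2]
    rw [abs_sub_le_iff]
    constructor <;> linarith
  have : ‖D θ₁ - D θ₂‖ ≤ γ * c := by
    apply pi_norm_le_iff_of_nonneg (by positivity) |>.mpr
    intro j
    simpa [Real.norm_eq_abs] using hDb j
  exact this
end

section
/- Let $\mathbf{D}: \mathbb{R}^p \to \mathbb{R}^p$ be the max-plus FQI operator $\mathbf{D}\theta = -[F_s^\top \boxtimes (-(G_s \boxtimes (\gamma\theta)))]$ with $F_s$ doubly $\mathbb{R}$-astic, $G_s$ row $\mathbb{R}$-astic, and $\gamma \in (0,1)$. Then the iteration $\theta^{(\ell+1)} = \mathbf{D}\theta^{(\ell)}$ started from $\theta^{(0)} = 0$ converges to the unique fixed point $\theta^* \in \mathbb{R}^p$ of $\mathbf{D}$, with $\|\theta^{(\ell)} - \theta^*\|_\infty \le \frac{\gamma^\ell}{1-\gamma}\|\theta^{(1)} - \theta^{(0)}\|_\infty$. -/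
open Finset

lemma mp_sup_le_sup_add {k : ℕ} (A : Fin k → WithBot ℝ) (x y : Fin k → ℝ) (c : ℝ)
    (h : ∀ j, x j ≤ y j + c) :
    (univ.sup fun j => A j + (x j : WithBot ℝ)) ≤
      (univ.sup fun j => A j + (y j : WithBot ℝ)) + (c : WithBot ℝ) := by
  refine Finset.sup_le fun j _ => ?_
  calc A j + (x j : WithBot ℝ)
      ≤ A j + ((y j + c : ℝ) : WithBot ℝ) :=
        add_le_add_right (WithBot.coe_le_coe.mpr (h j)) _
    _ = (A j + (y j : WithBot ℝ)) + (c : WithBot ℝ) := by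
        rw [WithBot.coe_add, add_assoc]
    _ ≤ _ := add_le_add (Finset.le_sup (f := fun j => A j + (y j : WithBot ℝ)) (mem_univ j)) le_rfl

/-- the MP-FQI iteration `θ⁽ˡ⁺¹⁾ = Dθ⁽ˡ⁾` from `θ⁽⁰⁾ = 0` converges to
the unique fixed point `θ*` with `‖θ⁽ˡ⁾ - θ*‖ ≤ γ^ℓ/(1-γ) ‖θ⁽¹⁾ - θ⁽⁰⁾‖`. -/
theorem mpfqi_iteration_convergence {n p : ℕ}
    (Fs Gs : Fin n → Fin p → WithBot ℝ)
    (hFrow : ∀ i, ∃ j, Fs i j ≠ ⊥) (hFcol : ∀ j, ∃ i, Fs i j ≠ ⊥)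
    (hGrow : ∀ i, ∃ j, Gs i j ≠ ⊥)
    (γ : ℝ) (hγ0 : 0 < γ) (hγ1 : γ < 1)
    (g : (Fin p → ℝ) → Fin n → ℝ)
    (hg : ∀ θ i, (g θ i : WithBot ℝ) =
          mpMulVec Gs (fun j => ((γ * θ j : ℝ) : WithBot ℝ)) i)
    (D : (Fin p → ℝ) → Fin p → ℝ)
    (hD : ∀ θ j, ((-(D θ j) : ℝ) : WithBot ℝ) =
          mpMulVec (fun j i => Fs i j) (fun i => ((-(g θ i) : ℝ) : WithBot ℝ)) j) :
    ∃ θstar : Fin p → ℝ, D θstar = θstar ∧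
      (∀ θ' : Fin p → ℝ, D θ' = θ' → θ' = θstar) ∧
      ∀ ℓ : ℕ, ‖D^[ℓ] 0 - θstar‖ ≤ γ ^ ℓ / (1 - γ) * ‖D 0 - (0 : Fin p → ℝ)‖ := by
  -- g is γ-Lipschitz pointwise
  have hgle : ∀ θ θ' : Fin p → ℝ, ∀ i, g θ i ≤ g θ' i + γ * dist θ θ' := by
    intro θ θ' i
    have hx : ∀ j, γ * θ j ≤ γ * θ' j + γ * dist θ θ' := by
      intro j
      have h1 : dist (θ j) (θ' j) ≤ dist θ θ' := dist_le_pi_dist θ θ' j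
      rw [Real.dist_eq] at h1
      have h2 : θ j - θ' j ≤ dist θ θ' := (abs_le.mp h1).2
      nlinarith
    have h3 : (g θ i : WithBot ℝ) ≤ ((g θ' i + γ * dist θ θ' : ℝ) : WithBot ℝ) := by
      rw [WithBot.coe_add, hg θ i, hg θ' i]
      exact mp_sup_le_sup_add (Gs i) _ _ _ hx
    exact WithBot.coe_le_coe.mp h3
  -- D is γ-Lipschitz pointwise (one-sided)
  have hDle : ∀ θ θ' : Fin p → ℝ, ∀ j, -(D θ j) ≤ -(D θ' j) + γ * dist θ θ' := by
    intro θ θ' j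
    have hx : ∀ i, -(g θ i) ≤ -(g θ' i) + γ * dist θ θ' := by
      intro i
      have := hgle θ' θ i
      rw [dist_comm θ' θ] at this
      linarith
    have h3 : ((-(D θ j) : ℝ) : WithBot ℝ) ≤
        ((-(D θ' j) + γ * dist θ θ' : ℝ) : WithBot ℝ) := by
      rw [WithBot.coe_add, hD θ j, hD θ' j]
      exact mp_sup_le_sup_add (fun i => Fs i j) _ _ _ hx
    exact WithBot.coe_le_coe.mp h3
  have hdist : ∀ θ θ' : Fin p → ℝ, dist (D θ) (D θ') ≤ γ * dist θ θ' := by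
    intro θ θ'
    refine dist_pi_le_iff (by positivity) |>.mpr fun j => ?_
    rw [Real.dist_eq, abs_le]
    constructor
    · have := hDle θ θ' j; linarith
    · have := hDle θ' θ j; rw [dist_comm θ' θ] at this; linarith
  set K : NNReal := ⟨γ, hγ0.le⟩ with hK
  have hC : ContractingWith K D := by
    constructor
    · exact_mod_cast hγ1
    · exact LipschitzWith.of_dist_le_mul fun θ θ' => hdist θ θ'
  refine ⟨ContractingWith.fixedPoint D hC, hC.fixedPoint_isFixedPt, ?_, ?_⟩
  · intro θ' hθ'
    exact hC.fixedPoint_unique hθ'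
  · intro ℓ
    have h := hC.apriori_dist_iterate_fixedPoint_le (0 : Fin p → ℝ) ℓ
    rw [dist_eq_norm] at h
    have h0 : dist (0 : Fin p → ℝ) (D 0) = ‖D 0 - (0 : Fin p → ℝ)‖ := by
      rw [dist_comm, dist_eq_norm]
    rw [h0] at h
    calc ‖D^[ℓ] 0 - ContractingWith.fixedPoint D hC‖
        ≤ ‖D 0 - (0 : Fin p → ℝ)‖ * (K : ℝ) ^ ℓ / (1 - K) := h
      _ = γ ^ ℓ / (1 - γ) * ‖D 0 - (0 : Fin p → ℝ)‖ := by
          rw [show (K : ℝ) = γ from rfl]; ring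
end
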